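/- Let Γ be a finite graph, G ≤ Aut(Γ) acting transitively on the edge set of Γ, and N ⊴ G a normal subgroup whose orbits on vertices all have size greater than 1 but N is intransitive on each bipart. If N acts semiregularly on V(Γ) and Γ and the quotient graph Γ_N have the same valency k, then for any subgroup H with N ≤ H ≤ G, H is regular on E(Γ) if and only if H/N is regular on E(Γ_N). -/

import Mathlib

/-- Lemma on normal quotients: let `Γ` be a finite graph, `G` an edge-transitive
group of automorphisms, `N ⊴ G` semiregular with all vertex orbits of size `> 1`
but intransitive, and let `Δ` (with quotient map `π : V → V'`) be the quotient
graph whose vertices are the `N`-orbits. If `Γ` and `Δ` have the same valency `k`,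
then for `N ≤ H ≤ G`, `H` is regular on `E(Γ)` iff `H/N` is regular on `E(Δ)`. -/
theorem regular_on_edges_iff_quotient_regular
    {V V' : Type*} [Fintype V] [Fintype V'] [DecidableEq V] [DecidableEq V']
    (Γ : SimpleGraph V) (Δ : SimpleGraph V')
    [DecidableRel Γ.Adj] [DecidableRel Δ.Adj]
    (G N H : Subgroup (Equiv.Perm V))
    (hGaut : ∀ g ∈ G, ∀ a b : V, Γ.Adj a b ↔ Γ.Adj (g a) (g b))
    (hGedge : ∀ v w v' w' : V, Γ.Adj v w → Γ.Adj v' w' →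
      ∃ g ∈ G, (g v = v' ∧ g w = w') ∨ (g v = w' ∧ g w = v'))
    (hNG : N ≤ G)
    (hNnormal : ∀ g ∈ G, ∀ n ∈ N, g * n * g⁻¹ ∈ N)
    (horb : ∀ v : V, ∃ n ∈ N, n v ≠ v)
    (hintrans : ∃ v w : V, ∀ n ∈ N, n v ≠ w)
    (hsemireg : ∀ n ∈ N, ∀ v : V, n v = v → n = 1)
    (π : V → V') (hπsurj : Function.Surjective π)
    (hπfib : ∀ v w : V, π v = π w ↔ ∃ n ∈ N, n v = w)
    (hΔadj : ∀ a b : V', Δ.Adj a b ↔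
      (a ≠ b ∧ ∃ v w : V, π v = a ∧ π w = b ∧ Γ.Adj v w))
    (k : ℕ) (hΓdeg : ∀ v : V, Γ.degree v = k) (hΔdeg : ∀ a : V', Δ.degree a = k)
    (hNH : N ≤ H) (hHG : H ≤ G) :
    ((∀ v w v' w' : V, Γ.Adj v w → Γ.Adj v' w' →
        ∃ h ∈ H, (h v = v' ∧ h w = w') ∨ (h v = w' ∧ h w = v')) ∧
      (∀ h ∈ H, ∀ v w : V, Γ.Adj v w →
        ((h v = v ∧ h w = w) ∨ (h v = w ∧ h w = v)) → h = 1)) ↔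
    ((∀ a b a' b' : V', Δ.Adj a b → Δ.Adj a' b' →
        ∃ h ∈ H, ((∀ v, π v = a → π (h v) = a') ∧ (∀ w, π w = b → π (h w) = b')) ∨
          ((∀ v, π v = a → π (h v) = b') ∧ (∀ w, π w = b → π (h w) = a'))) ∧
      (∀ h ∈ H, ∀ a b : V', Δ.Adj a b →
        (((∀ v, π v = a → π (h v) = a) ∧ (∀ w, π w = b → π (h w) = b)) ∨
          ((∀ v, π v = a → π (h v) = b) ∧ (∀ w, π w = b → π (h w) = a))) →
        h ∈ N)) := by

  -- `N` fixes each fiber of `π`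
  have hNfix : ∀ n ∈ N, ∀ v : V, π (n v) = π v := by
    intro n hn v
    rw [hπfib]
    exact ⟨n⁻¹, N.inv_mem hn, Equiv.symm_apply_apply n v⟩
  -- `G` maps fibers to fibers
  have hGfib : ∀ g ∈ G, ∀ u w : V, π u = π w → π (g u) = π (g w) := by
    intro g hg u w huw
    obtain ⟨n, hn, hnu⟩ := (hπfib u w).mp huw
    rw [hπfib]
    refine ⟨g * n * g⁻¹, hNnormal g hg n hn, ?_⟩
    simp [Equiv.Perm.mul_apply, hnu]
  -- lifting edges of Δ
  have hexist : ∀ (v : V) (b : V'), Δ.Adj (π v) b → ∃ w, Γ.Adj v w ∧ π w = b := by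
    intro v b hab
    obtain ⟨hne, v₀, w₀, hv₀, hw₀, hadj⟩ := (hΔadj _ _).mp hab
    obtain ⟨n, hn, hnv⟩ := (hπfib v₀ v).mp (by rw [hv₀])
    refine ⟨n w₀, ?_, by rw [hNfix n hn, hw₀]⟩
    have := (hGaut n (hNG hn) v₀ w₀).mp hadj
    rwa [hnv] at this
  -- counting: the image of the neighbourhood of `v` is the neighbourhood of `π v`
  have hkey : ∀ v : V, ((Γ.neighborFinset v).image π = Δ.neighborFinset (π v)) ∧
      Set.InjOn π (Γ.neighborFinset v) := by
    intro v
    have hs : (Γ.neighborFinset v).card = k := by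
      rw [Γ.card_neighborFinset_eq_degree, hΓdeg]
    have ht : (Δ.neighborFinset (π v)).card = k := by
      rw [Δ.card_neighborFinset_eq_degree, hΔdeg]
    have hsub : Δ.neighborFinset (π v) ⊆ (Γ.neighborFinset v).image π := by
      intro b hb
      obtain ⟨w, hw, hwb⟩ := hexist v b (Δ.mem_neighborFinset _ _ |>.mp hb)
      exact Finset.mem_image.mpr ⟨w, (Γ.mem_neighborFinset _ _).mpr hw, hwb⟩
    have hle : ((Γ.neighborFinset v).image π).card ≤ (Δ.neighborFinset (π v)).card := by
      rw [ht]; exact (Finset.card_image_le).trans hs.le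
    have heq : Δ.neighborFinset (π v) = (Γ.neighborFinset v).image π :=
      Finset.eq_of_subset_of_card_le hsub hle
    refine ⟨heq.symm, ?_⟩
    apply Finset.injOn_of_card_image_eq
    rw [← heq, ht, hs]
  have hnofib : ∀ v w : V, Γ.Adj v w → π v ≠ π w := by
    intro v w hvw h
    have hmem : π v ∈ (Γ.neighborFinset v).image π :=
      Finset.mem_image.mpr ⟨w, (Γ.mem_neighborFinset _ _).mpr hvw, h.symm⟩
    rw [(hkey v).1] at hmem
    exact Δ.irrefl ((Δ.mem_neighborFinset _ _).mp hmem)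
  have huniq : ∀ v w w' : V, Γ.Adj v w → Γ.Adj v w' → π w = π w' → w = w' := by
    intro v w w' h1 h2 h3
    exact (hkey v).2 ((Γ.mem_neighborFinset _ _).mpr h1) ((Γ.mem_neighborFinset _ _).mpr h2) h3
  have hΔedge : ∀ v w : V, Γ.Adj v w → Δ.Adj (π v) (π w) := by
    intro v w hvw
    exact (hΔadj _ _).mpr ⟨hnofib v w hvw, v, w, rfl, rfl, hvw⟩
  constructor
  · rintro ⟨htrans, hfree⟩
    constructor
    · intro a b a' b' hab ha'b'
      obtain ⟨-, v, w, hv, hw, hvw⟩ := (hΔadj _ _).mp hab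
      obtain ⟨-, v', w', hv', hw', hv'w'⟩ := (hΔadj _ _).mp ha'b'
      obtain ⟨h, hh, hc⟩ := htrans v w v' w' hvw hv'w'
      refine ⟨h, hh, ?_⟩
      rcases hc with ⟨h1, h2⟩ | ⟨h1, h2⟩
      · refine Or.inl ⟨?_, ?_⟩
        · intro u hu
          rw [hGfib h (hHG hh) u v (by rw [hu, hv]), h1, hv']
        · intro u hu
          rw [hGfib h (hHG hh) u w (by rw [hu, hw]), h2, hw']
      · refine Or.inr ⟨?_, ?_⟩
        · intro u hu
          rw [hGfib h (hHG hh) u v (by rw [hu, hv]), h1, hw']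
        · intro u hu
          rw [hGfib h (hHG hh) u w (by rw [hu, hw]), h2, hv']
    · intro h hh a b hab hfix
      obtain ⟨-, v, w, hv, hw, hvw⟩ := (hΔadj _ _).mp hab
      rcases hfix with ⟨hA, hB⟩ | ⟨hA, hB⟩
      · obtain ⟨n, hn, hnv⟩ := (hπfib (h v) v).mp (by rw [hA v hv, hv])
        have hgH : n * h ∈ H := H.mul_mem (hNH hn) hh
        have hgv : (n * h) v = v := by simp [Equiv.Perm.mul_apply, hnv]
        have hgw : (n * h) w = w := by
          refine huniq v ((n * h) w) w ?_ hvw ?_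
          · have := (hGaut (n * h) (hHG hgH) v w).mp hvw
            rwa [hgv] at this
          · rw [Equiv.Perm.mul_apply, hNfix n hn, hB w hw, hw]
        have h1 : n * h = 1 := hfree _ hgH v w hvw (Or.inl ⟨hgv, hgw⟩)
        have h2 : h = n⁻¹ := eq_inv_of_mul_eq_one_right h1
        exact h2 ▸ N.inv_mem hn
      · obtain ⟨n, hn, hnv⟩ := (hπfib (h v) w).mp (by rw [hA v hv, hw])
        have hgH : n * h ∈ H := H.mul_mem (hNH hn) hh
        have hgv : (n * h) v = w := by simp [Equiv.Perm.mul_apply, hnv]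
        have hgw : (n * h) w = v := by
          refine huniq w ((n * h) w) v ?_ hvw.symm ?_
          · have := (hGaut (n * h) (hHG hgH) v w).mp hvw
            rwa [hgv] at this
          · rw [Equiv.Perm.mul_apply, hNfix n hn, hB w hw, hv]
        have h1 : n * h = 1 := hfree _ hgH v w hvw (Or.inr ⟨hgv, hgw⟩)
        have h2 : h = n⁻¹ := eq_inv_of_mul_eq_one_right h1
        exact h2 ▸ N.inv_mem hn
  · rintro ⟨htrans, hfree⟩
    constructor
    · intro v w v' w' hvw hv'w'
      obtain ⟨h, hh, hc⟩ := htrans (π v) (π w) (π v') (π w') (hΔedge v w hvw) (hΔedge v' w' hv'w')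
      rcases hc with ⟨hA, hB⟩ | ⟨hA, hB⟩
      · obtain ⟨n, hn, hnv⟩ := (hπfib (h v) v').mp (hA v rfl)
        have hgH : n * h ∈ H := H.mul_mem (hNH hn) hh
        have hgv : (n * h) v = v' := by simp [Equiv.Perm.mul_apply, hnv]
        have hgw : (n * h) w = w' := by
          refine huniq v' ((n * h) w) w' ?_ hv'w' ?_
          · have := (hGaut (n * h) (hHG hgH) v w).mp hvw
            rwa [hgv] at this
          · rw [Equiv.Perm.mul_apply, hNfix n hn, hB w rfl]
        exact ⟨n * h, hgH, Or.inl ⟨hgv, hgw⟩⟩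
      · obtain ⟨n, hn, hnv⟩ := (hπfib (h v) w').mp (hA v rfl)
        have hgH : n * h ∈ H := H.mul_mem (hNH hn) hh
        have hgv : (n * h) v = w' := by simp [Equiv.Perm.mul_apply, hnv]
        have hgw : (n * h) w = v' := by
          refine huniq w' ((n * h) w) v' ?_ hv'w'.symm ?_
          · have := (hGaut (n * h) (hHG hgH) v w).mp hvw
            rwa [hgv] at this
          · rw [Equiv.Perm.mul_apply, hNfix n hn, hB w rfl]
        exact ⟨n * h, hgH, Or.inr ⟨hgv, hgw⟩⟩
    · intro h hh v w hvw hcase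
      have hhN : h ∈ N := by
        apply hfree h hh (π v) (π w) (hΔedge v w hvw)
        rcases hcase with ⟨h1, h2⟩ | ⟨h1, h2⟩
        · refine Or.inl ⟨?_, ?_⟩
          · intro u hu
            rw [hGfib h (hHG hh) u v hu, h1]
          · intro u hu
            rw [hGfib h (hHG hh) u w hu, h2]
        · refine Or.inr ⟨?_, ?_⟩
          · intro u hu
            rw [hGfib h (hHG hh) u v hu, h1]
          · intro u hu
            rw [hGfib h (hHG hh) u w hu, h2]
      rcases hcase with ⟨h1, -⟩ | ⟨h1, -⟩
      · exact hsemireg h hhN v h1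
      · exact absurd (hNfix h hhN v) (by rw [h1]; exact (hnofib v w hvw).symm)
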